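/- arXiv:2109.06373 — 2 statements merged into one kernel-verified Lean document; each statement's English description precedes it below -/
import Mathlib

section
/- For disjoint subsets A, B ⊆ [n], define ψ_{A,B}(f) = Σ_{a∈A,b∈B} [ξ_a·(θ_b ⊙ f) + ξ_b·(θ_a ⊙ f)]. Then ψ_{A⊔B} = ψ_A + ψ_{A,B} + ψ_B, and moreover ψ_{A,B} commutes with every ψ_C and with every ψ_{C,D}. -/
open Finset

/-- The index set for the `2n` fermionic generators `θ₁,…,θₙ,ξ₁,…,ξₙ`:
`Sum.inl i` is `θ_i`, `Sum.inr i` is `ξ_i`. -/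
abbrev Gen (n : ℕ) := Fin n ⊕ Fin n

/-- The position of a generator in the fixed order `θ₁ < ⋯ < θₙ < ξ₁ < ⋯ < ξₙ`. -/
def gidx {n : ℕ} : Gen n → ℕ
  | .inl i => (i : ℕ)
  | .inr i => n + (i : ℕ)

/-- The exterior algebra `∧{Θ_n, Ξ_n}` over `ℂ`, modeled by coefficient functions
on the basis of monomials `θ_S · ξ_T`, a monomial being indexed by a subset of the
`2n` generators. -/
abbrev ExtA (n : ℕ) := Finset (Gen n) → ℂ

/-- The basis monomial indexed by a set of generators (product taken in the fixed order). -/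
noncomputable def emon {n : ℕ} (S : Finset (Gen n)) : ExtA n := fun T => if T = S then 1 else 0

/-- The generator `θ_i`. -/
noncomputable def theta {n : ℕ} (i : Fin n) : ExtA n := emon {Sum.inl i}

/-- The generator `ξ_i`. -/
noncomputable def xi {n : ℕ} (i : Fin n) : ExtA n := emon {Sum.inr i}

/-- The sign `(-1)^{#inversions}` obtained when concatenating the sorted monomial on `S`
with the sorted monomial on `T` and re-sorting. -/
noncomputable def msign {n : ℕ} (S T : Finset (Gen n)) : ℂ :=
  (-1 : ℂ) ^ (((S ×ˢ T).filter (fun p => gidx p.2 < gidx p.1)).card)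

/-- Multiplication in the exterior algebra `∧{Θ_n, Ξ_n}`. -/
noncomputable def emul {n : ℕ} (f g : ExtA n) : ExtA n :=
  fun U => ∑ S ∈ U.powerset, msign S (U \ S) * f S * g (U \ S)

/-- The inner product on `∧{Θ_n, Ξ_n}` making the monomials `θ_S · ξ_T` orthonormal. -/
noncomputable def einner {n : ℕ} (f g : ExtA n) : ℂ :=
  ∑ S : Finset (Gen n), f S * g S

/-- The contraction (exterior differentiation) action `f ⊙ h`: on generators,
`ω_i ⊙ (ω_{j_1} ⋯ ω_{j_r})` removes `ω_i` with the sign `(-1)^{s-1}` if `j_s = i`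
and gives `0` otherwise, extended bilinearly (on a monomial `ω_S`, it is the
composite of the single contractions). -/
noncomputable def odot {n : ℕ} (f h : ExtA n) : ExtA n :=
  fun T => ∑ S : Finset (Gen n), if Disjoint S T then msign S T * f S * h (S ∪ T) else 0

/-- The sign produced when the permutation `w` reorders the (sorted) monomial on `S`. -/
noncomputable def actsign {n : ℕ} (w : Equiv.Perm (Fin n)) (S : Finset (Gen n)) : ℂ :=
  (-1 : ℂ) ^ (((S ×ˢ S).filter (fun p =>
      gidx p.1 < gidx p.2 ∧
        gidx (Equiv.sumCongr w w p.2) < gidx (Equiv.sumCongr w w p.1))).card)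

/-- The diagonal action of a permutation `w ∈ S_n` on `∧{Θ_n, Ξ_n}`:
`w · θ_i = θ_{w(i)}`, `w · ξ_i = ξ_{w(i)}`, extended as an algebra automorphism. -/
noncomputable def pact {n : ℕ} (w : Equiv.Perm (Fin n)) (f : ExtA n) : ExtA n :=
  fun T =>
    actsign w (T.map (Equiv.sumCongr w w).symm.toEmbedding) *
      f (T.map (Equiv.sumCongr w w).symm.toEmbedding)

/-- The block operator `ρ_B`: for `|B| > 1`, `ρ_B(f) = ∑_{i ≠ j ∈ B} ξ_i · (θ_j ⊙ f)`;
for `B = {i}`, `ρ_B(f) = ξ_i · (θ_i ⊙ f)`. -/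
noncomputable def rho {n : ℕ} (B : Finset (Fin n)) (f : ExtA n) : ExtA n :=
  if 1 < B.card then
    ∑ i ∈ B, ∑ j ∈ B.erase i, emul (xi i) (odot (theta j) f)
  else
    ∑ i ∈ B, emul (xi i) (odot (theta i) f)

/-- The operator `ψ_B`, equal to `ρ_B` when `|B| > 1` and `0` when `|B| ≤ 1`. -/
noncomputable def psi {n : ℕ} (B : Finset (Fin n)) (f : ExtA n) : ExtA n :=
  if 1 < B.card then rho B f else 0

/-- The two-set operator `ψ_{A,B}(f) = ∑_{a ∈ A, b ∈ B} [ξ_a·(θ_b ⊙ f) + ξ_b·(θ_a ⊙ f)]`. -/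
noncomputable def psiPair {n : ℕ} (A B : Finset (Fin n)) (f : ExtA n) : ExtA n :=
  ∑ a ∈ A, ∑ b ∈ B, (emul (xi a) (odot (theta b) f) + emul (xi b) (odot (theta a) f))

/-- A set partition of `[n]` is noncrossing if whenever `a < b < c < d` with `a,c` in a
block `B` and `b,d` in a block `C`, then `B = C`. -/
def Noncrossing {n : ℕ} (π : Finpartition (Finset.univ : Finset (Fin n))) : Prop :=
  ∀ B ∈ π.parts, ∀ C ∈ π.parts, ∀ a b c d : Fin n,
    a < b → b < c → c < d → a ∈ B → c ∈ B → b ∈ C → d ∈ C → B = C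

/-- The composite operator `ρ_π = ρ_{B_1} ∘ ⋯ ∘ ρ_{B_k}` over the blocks of `π`
(the order of composition is immaterial since block operators commute). -/
noncomputable def rhoPartition {n : ℕ} (π : Finpartition (Finset.univ : Finset (Fin n))) :
    ExtA n → ExtA n :=
  π.parts.toList.foldr (fun B g => rho B ∘ g) id

/-- The top monomial `θ_1 θ_2 ⋯ θ_n`. -/
noncomputable def topTheta (n : ℕ) : ExtA n :=
  emon ((Finset.univ : Finset (Fin n)).image Sum.inl)

/-- The fermion `F_π := ρ_π(θ_1 θ_2 ⋯ θ_n)` attached to a set partition `π` of `[n]`. -/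
noncomputable def Fperm {n : ℕ} (π : Finpartition (Finset.univ : Finset (Fin n))) : ExtA n :=
  rhoPartition π (topTheta n)

/-- The fermion `f_π := (ξ_1 + ⋯ + ξ_n) ⊙ F_π`. -/
noncomputable def fperm {n : ℕ} (π : Finpartition (Finset.univ : Finset (Fin n))) : ExtA n :=
  odot (∑ i : Fin n, xi i) (Fperm π)

noncomputable def E {n : ℕ} (i j : Fin n) (f : ExtA n) : ExtA n :=
  emul (xi i) (odot (theta j) f)

def mcnt {n : ℕ} (x : Gen n) (T : Finset (Gen n)) : ℕ :=
  (T.filter fun t => gidx t < gidx x).card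

lemma msign_singleton {n : ℕ} (x : Gen n) (T : Finset (Gen n)) :
    msign {x} T = (-1 : ℂ) ^ (mcnt x T) := by
  unfold msign mcnt
  congr 1
  rw [Finset.singleton_product, Finset.filter_map, Finset.card_map]
  rfl

lemma odot_theta_apply {n : ℕ} (j : Fin n) (f : ExtA n) (T : Finset (Gen n)) :
    odot (theta j) f T =
      if Sum.inl j ∈ T then 0 else
        msign {Sum.inl j} T * f (insert (Sum.inl j) T) := by
  unfold odot theta emon
  rw [Finset.sum_eq_single ({Sum.inl j} : Finset (Gen n))]
  · by_cases h : Sum.inl j ∈ T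
    · simp [Finset.disjoint_singleton_left, h]
    · simp [Finset.disjoint_singleton_left, h, ← Finset.insert_eq]
  · intro S _ hS
    simp [hS]
  · simp

lemma emul_xi_apply {n : ℕ} (i : Fin n) (g : ExtA n) (U : Finset (Gen n)) :
    emul (xi i) g U =
      if Sum.inr i ∈ U then
        msign {Sum.inr i} (U.erase (Sum.inr i)) * g (U.erase (Sum.inr i))
      else 0 := by
  unfold emul xi emon
  by_cases h : Sum.inr i ∈ U
  · rw [Finset.sum_eq_single_of_mem ({Sum.inr i} : Finset (Gen n))
      (by simpa using h)]
    · simp [h, Finset.erase_eq]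
    · intro S _ hS
      simp [hS]
  · rw [if_neg h]
    apply Finset.sum_eq_zero
    intro S hS
    rcases eq_or_ne S ({Sum.inr i} : Finset (Gen n)) with rfl | hne
    · exact absurd (Finset.mem_powerset.mp hS (by simp)) h
    · simp [hne]

lemma E_apply {n : ℕ} (i j : Fin n) (f : ExtA n) (U : Finset (Gen n)) :
    E i j f U =
      if Sum.inr i ∈ U ∧ Sum.inl j ∉ U then
        (-1 : ℂ) ^ (mcnt (Sum.inr i) (U.erase (Sum.inr i)) +
            mcnt (Sum.inl j) (U.erase (Sum.inr i))) *
          f (insert (Sum.inl j) (U.erase (Sum.inr i)))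
      else 0 := by
  unfold E
  rw [emul_xi_apply]
  by_cases hi : Sum.inr i ∈ U
  · rw [if_pos hi, odot_theta_apply]
    by_cases hj : Sum.inl j ∈ U
    · have : Sum.inl j ∈ U.erase (Sum.inr i) := Finset.mem_erase.mpr ⟨by simp, hj⟩
      simp [this, hi, hj]
    · have hj' : Sum.inl j ∉ U.erase (Sum.inr i) := fun h => hj (Finset.mem_of_mem_erase h)
      rw [if_neg hj', if_pos ⟨hi, hj⟩, msign_singleton, msign_singleton, pow_add]
      ring
  · rw [if_neg hi, if_neg (fun h => hi h.1)]

lemma E_zero {n : ℕ} (i j : Fin n) : E i j (0 : ExtA n) = 0 := by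
  funext U
  rw [E_apply]
  simp only [Pi.zero_apply, mul_zero]
  split <;> rfl

lemma E_sum {n : ℕ} (i j : Fin n) {α : Type*} (s : Finset α) (g : α → ExtA n) :
    E i j (∑ a ∈ s, g a) = ∑ a ∈ s, E i j (g a) := by
  funext U
  rw [E_apply, Finset.sum_apply]
  simp only [E_apply, Finset.sum_apply, Finset.mul_sum]
  split
  · rfl
  · exact (Finset.sum_const_zero).symm

lemma mcnt_insert {n : ℕ} (x y : Gen n) (T : Finset (Gen n)) (h : y ∉ T) :
    mcnt x (insert y T) = (if gidx y < gidx x then 1 else 0) + mcnt x T := by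
  unfold mcnt
  rw [Finset.filter_insert]
  split
  · rw [Finset.card_insert_of_notMem (fun hc => h (Finset.mem_of_mem_filter _ hc))]
    omega
  · simp

lemma erase_erase_comm {α : Type*} [DecidableEq α] (s : Finset α) (a b : α) :
    (s.erase a).erase b = (s.erase b).erase a := by
  ext x
  simp only [Finset.mem_erase]
  tauto

lemma neg_pow_congr {a b : ℕ} (h : a % 2 = b % 2) : (-1 : ℂ) ^ a = (-1 : ℂ) ^ b := by
  rw [neg_one_pow_eq_pow_mod_two, h, ← neg_one_pow_eq_pow_mod_two]

lemma Ecomm {n : ℕ} (i j k l : Fin n) (f : ExtA n) :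
    E i j (E k l f) = E k l (E i j f) := by
  funext U
  simp only [E_apply, Finset.mem_insert, Finset.mem_erase]
  by_cases hi : Sum.inr i ∈ U <;> by_cases hk : Sum.inr k ∈ U <;>
    by_cases hj : Sum.inl j ∈ U <;> by_cases hl : Sum.inl l ∈ U <;>
    simp [hi, hk, hj, hl]
  by_cases hik : i = k
  · simp [hik]
  by_cases hjl : j = l
  · simp [hjl]
  rw [if_pos ⟨fun h => hik h.symm, fun h => hjl h.symm⟩, if_pos ⟨hik, hjl⟩]
  set W := (U.erase (Sum.inr i)).erase (Sum.inr k) with hW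
  have hki : Sum.inr k ∈ U.erase (Sum.inr i) :=
    Finset.mem_erase.mpr ⟨by simp [Ne.symm hik], hk⟩
  have hik' : Sum.inr i ∈ U.erase (Sum.inr k) :=
    Finset.mem_erase.mpr ⟨by simp [hik], hi⟩
  have hkW : Sum.inr k ∉ W := Finset.notMem_erase _ _
  have hiW : Sum.inr i ∉ W := by
    rw [hW, erase_erase_comm _ _ _]; exact Finset.notMem_erase _ _
  have hjW : Sum.inl j ∉ W := fun h => hj (Finset.mem_of_mem_erase (Finset.mem_of_mem_erase h))
  have hlW : Sum.inl l ∉ W := fun h => hl (Finset.mem_of_mem_erase (Finset.mem_of_mem_erase h))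
  have e1 : U.erase (Sum.inr i) = insert (Sum.inr k) W := (Finset.insert_erase hki).symm
  have e2 : U.erase (Sum.inr k) = insert (Sum.inr i) W := by
    rw [hW, erase_erase_comm _ _ _]; exact (Finset.insert_erase hik').symm
  have e3 : (insert (Sum.inl j) (U.erase (Sum.inr i))).erase (Sum.inr k) =
      insert (Sum.inl j) W := by
    rw [e1, Finset.erase_insert_of_ne (by simp), Finset.erase_insert hkW]
  have e4 : (insert (Sum.inl l) (U.erase (Sum.inr k))).erase (Sum.inr i) =
      insert (Sum.inl l) W := by
    rw [e2, Finset.erase_insert_of_ne (by simp), Finset.erase_insert hiW]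
  have ic : insert (Sum.inl l) (insert (Sum.inl j) W) =
      insert (Sum.inl j) (insert (Sum.inl l) W) := by
    ext x; simp only [Finset.mem_insert]; tauto
  rw [e3, e4, e1, e2, ic,
    mcnt_insert _ _ _ hkW, mcnt_insert _ _ _ hkW, mcnt_insert _ _ _ hiW,
    mcnt_insert _ _ _ hiW, mcnt_insert _ _ _ hjW, mcnt_insert _ _ _ hjW,
    mcnt_insert _ _ _ hlW, mcnt_insert _ _ _ hlW]
  rw [← mul_assoc, ← mul_assoc, ← pow_add, ← pow_add]
  congr 1
  apply neg_pow_congr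
  have hj' : (j : ℕ) < n := j.isLt
  have hl' : (l : ℕ) < n := l.isLt
  have hik2 : (i : ℕ) ≠ (k : ℕ) := fun h => hik (Fin.ext h)
  have hjl2 : (j : ℕ) ≠ (l : ℕ) := fun h => hjl (Fin.ext h)
  split_ifs <;> simp only [gidx] at * <;> omega

noncomputable def Ssum {n : ℕ} (P : Finset (Fin n × Fin n)) (f : ExtA n) : ExtA n :=
  ∑ p ∈ P, E p.1 p.2 f

lemma Ssum_comm {n : ℕ} (P Q : Finset (Fin n × Fin n)) (f : ExtA n) :
    Ssum P (Ssum Q f) = Ssum Q (Ssum P f) := by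
  unfold Ssum
  simp only [E_sum]
  rw [Finset.sum_comm]
  simp only [Ecomm]

lemma psi_eq_Ssum {n : ℕ} (C : Finset (Fin n)) (f : ExtA n) :
    psi C f = Ssum ((C ×ˢ C).filter fun p => p.1 ≠ p.2) f := by
  unfold psi rho Ssum
  by_cases h : 1 < C.card
  · rw [if_pos h, if_pos h, Finset.sum_filter, Finset.sum_product]
    apply Finset.sum_congr rfl
    intro i _
    have he : C.erase i = C.filter (fun j => ¬ i = j) := by
      ext x
      simp only [Finset.mem_erase, Finset.mem_filter]
      tauto
    rw [he, Finset.sum_filter]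
    rfl
  · rw [if_neg h]
    have : (C ×ˢ C).filter (fun p => p.1 ≠ p.2) = ∅ := by
      apply Finset.eq_empty_of_forall_notMem
      rintro ⟨a, b⟩ hp
      simp only [Finset.mem_filter, Finset.mem_product] at hp
      exact h (Finset.one_lt_card.mpr ⟨a, hp.1.1, b, hp.1.2, hp.2⟩)
    rw [this, Finset.sum_empty]

lemma psiPair_eq_Ssum {n : ℕ} {A B : Finset (Fin n)} (hAB : Disjoint A B) (f : ExtA n) :
    psiPair A B f = Ssum ((A ×ˢ B) ∪ (B ×ˢ A)) f := by
  unfold psiPair Ssum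
  have hd : Disjoint (A ×ˢ B) (B ×ˢ A) := by
    rw [Finset.disjoint_left]
    rintro ⟨a, b⟩ hp hq
    simp only [Finset.mem_product] at hp hq
    exact (Finset.disjoint_left.mp hAB hp.1) hq.1
  rw [Finset.sum_union hd, Finset.sum_product, Finset.sum_product]
  rw [Finset.sum_comm (s := B) (t := A)]
  rw [← Finset.sum_add_distrib]
  apply Finset.sum_congr rfl
  intro a _
  rw [← Finset.sum_add_distrib]
  rfl

theorem psiPair_decomposition_and_comm' (n : ℕ) (A B : Finset (Fin n)) (hAB : Disjoint A B) :
    (∀ f : ExtA n, psi (A ∪ B) f = psi A f + psiPair A B f + psi B f)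
    ∧ (∀ (C : Finset (Fin n)) (f : ExtA n), psiPair A B (psi C f) = psi C (psiPair A B f))
    ∧ (∀ (C D : Finset (Fin n)), Disjoint C D →
        ∀ f : ExtA n, psiPair A B (psiPair C D f) = psiPair C D (psiPair A B f)) := by
  have hne : ∀ x, x ∈ A → x ∈ B → False := fun x hx hy => Finset.disjoint_left.mp hAB hx hy
  refine ⟨?_, ?_, ?_⟩
  · intro f
    rw [psi_eq_Ssum, psi_eq_Ssum, psi_eq_Ssum, psiPair_eq_Ssum hAB]
    have hset : ((A ∪ B) ×ˢ (A ∪ B)).filter (fun p => p.1 ≠ p.2) =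
        (((A ×ˢ A).filter (fun p => p.1 ≠ p.2) ∪ ((A ×ˢ B) ∪ (B ×ˢ A))) ∪
          (B ×ˢ B).filter (fun p => p.1 ≠ p.2)) := by
      ext a
      obtain ⟨x, y⟩ := a
      simp only [Finset.mem_filter, Finset.mem_product, Finset.mem_union, ne_eq]
      have h1 : x ∈ A → y ∈ B → ¬ x = y := fun hx hy hxy => hne x hx (hxy ▸ hy)
      have h2 : x ∈ B → y ∈ A → ¬ x = y := fun hx hy hxy => hne x (hxy ▸ hy) hx
      tauto
    have d1 : Disjoint ((A ×ˢ A).filter (fun p => p.1 ≠ p.2)) ((A ×ˢ B) ∪ (B ×ˢ A)) := by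
      rw [Finset.disjoint_left]
      rintro ⟨x, y⟩ hp hq
      simp only [Finset.mem_filter, Finset.mem_product, Finset.mem_union] at hp hq
      rcases hq with h | h
      · exact hne y hp.1.2 h.2
      · exact hne x hp.1.1 h.1
    have d2 : Disjoint ((A ×ˢ A).filter (fun p => p.1 ≠ p.2) ∪ ((A ×ˢ B) ∪ (B ×ˢ A)))
        ((B ×ˢ B).filter (fun p => p.1 ≠ p.2)) := by
      rw [Finset.disjoint_left]
      rintro ⟨x, y⟩ hp hq
      simp only [Finset.mem_filter, Finset.mem_product, Finset.mem_union] at hp hq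
      rcases hp with (h | (h | h))
      · exact hne x h.1.1 hq.1.1
      · exact hne x h.1 hq.1.1
      · exact hne y h.2 hq.1.2
    rw [hset]
    unfold Ssum
    rw [Finset.sum_union d2, Finset.sum_union d1]
  · intro C f
    rw [psi_eq_Ssum, psiPair_eq_Ssum hAB, psiPair_eq_Ssum hAB, psi_eq_Ssum, Ssum_comm]
  · intro C D hCD f
    rw [psiPair_eq_Ssum hCD, psiPair_eq_Ssum hAB, psiPair_eq_Ssum hAB, psiPair_eq_Ssum hCD,
      Ssum_comm]

/-- For disjoint `A, B`: `ψ_{A⊔B} = ψ_A + ψ_{A,B} + ψ_B`, and `ψ_{A,B}` commutes with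
every `ψ_C` and with every `ψ_{C,D}`. -/
theorem psiPair_decomposition_and_comm (n : ℕ) (A B : Finset (Fin n)) (hAB : Disjoint A B) :
    (∀ f : ExtA n, psi (A ∪ B) f = psi A f + psiPair A B f + psi B f)
    ∧ (∀ (C : Finset (Fin n)) (f : ExtA n), psiPair A B (psi C f) = psi C (psiPair A B f))
    ∧ (∀ (C D : Finset (Fin n)), Disjoint C D →
        ∀ f : ExtA n, psiPair A B (psiPair C D f) = psiPair C D (psiPair A B f)) :=
  psiPair_decomposition_and_comm' n A B hAB
end

section
/- The mixed-pair operators annihilate via antisymmetry: for any four pairwise disjoint subsets I, J, S, T of [n], the operator ψ_{I,S}∘ψ_{J,T} + ψ_{I,J}∘ψ_{S,T} + ψ_{I,T}∘ψ_{J,S} is the zero operator on Λ{Θ_n,Ξ_n}. -/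
open Finset

noncomputable def sgn {n : ℕ} (x : Gen n) (T : Finset (Gen n)) : ℂ :=
  (-1 : ℂ) ^ ((T.filter (fun y => gidx y < gidx x)).card)

lemma sgn_insert {n : ℕ} (x y : Gen n) (T : Finset (Gen n)) (hy : y ∉ T) :
    sgn x (insert y T) = (if gidx y < gidx x then -1 else 1) * sgn x T := by
  classical
  unfold sgn
  rw [Finset.filter_insert]
  split
  · rw [Finset.card_insert_of_notMem (by simp [hy]), pow_succ]
    ring
  · simp

lemma msign_single {n : ℕ} (x : Gen n) (T : Finset (Gen n)) :
    msign {x} T = sgn x T := by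
  classical
  unfold msign sgn
  congr 1
  rw [Finset.singleton_product, Finset.filter_map, Finset.card_map]
  rfl

noncomputable def EmOp {n : ℕ} (a : Fin n) (g : ExtA n) : ExtA n := fun U =>
  if Sum.inr a ∈ U then sgn (Sum.inr a) (U.erase (Sum.inr a)) * g (U.erase (Sum.inr a)) else 0

noncomputable def DmOp {n : ℕ} (b : Fin n) (f : ExtA n) : ExtA n := fun T =>
  if Sum.inl b ∈ T then 0 else sgn (Sum.inl b) T * f (insert (Sum.inl b) T)

lemma emul_xi {n : ℕ} (a : Fin n) (g : ExtA n) : emul (xi a) g = EmOp a g := by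
  classical
  funext U
  unfold emul EmOp xi emon
  have : ∀ S ∈ U.powerset,
      msign S (U \ S) * (if S = ({Sum.inr a} : Finset (Gen n)) then (1:ℂ) else 0) * g (U \ S)
        = if S = ({Sum.inr a} : Finset (Gen n)) then msign S (U \ S) * g (U \ S) else 0 := by
    intro S _
    split <;> ring
  rw [Finset.sum_congr rfl this, Finset.sum_ite_eq' U.powerset ({Sum.inr a} : Finset (Gen n))]
  by_cases h : Sum.inr a ∈ U
  · simp [h, ← Finset.erase_eq, msign_single]
  · simp [h]

lemma odot_theta {n : ℕ} (b : Fin n) (f : ExtA n) : odot (theta b) f = DmOp b f := by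
  classical
  funext T
  unfold odot DmOp theta emon
  have : ∀ S ∈ (Finset.univ : Finset (Finset (Gen n))),
      (if Disjoint S T then msign S T * (if S = ({Sum.inl b} : Finset (Gen n)) then (1:ℂ) else 0) * f (S ∪ T) else 0)
        = if S = ({Sum.inl b} : Finset (Gen n)) then
            (if Disjoint S T then msign S T * f (S ∪ T) else 0) else 0 := by
    intro S _
    by_cases hS : S = ({Sum.inl b} : Finset (Gen n)) <;> by_cases hD : Disjoint S T <;>
      simp [hS, hD] <;> ring
  rw [Finset.sum_congr rfl this, Finset.sum_ite_eq' Finset.univ ({Sum.inl b} : Finset (Gen n))]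
  simp only [Finset.mem_univ, if_pos, Finset.disjoint_singleton_left, ← Finset.insert_eq,
    msign_single]
  by_cases h : Sum.inl b ∈ T <;> simp [h]

lemma DmOp_DmOp {n : ℕ} (b d : Fin n) (f : ExtA n) :
    DmOp b (DmOp d f) = - DmOp d (DmOp b f) := by
  classical
  funext T
  simp only [DmOp, Pi.neg_apply]
  by_cases hb : Sum.inl b ∈ T
  · by_cases hd : Sum.inl d ∈ T
    · simp [hb, hd]
    · simp [hb, hd, Finset.mem_insert]
  · by_cases hd : Sum.inl d ∈ T
    · simp [hb, hd, Finset.mem_insert]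
    · by_cases hbd : b = d
      · subst hbd; simp [hb]
      · have hbd' : (Sum.inl b : Gen n) ≠ Sum.inl d := by simp [hbd]
        simp only [if_neg hb, if_neg hd, Finset.mem_insert, hbd', hbd'.symm, false_or,
          if_neg, hb, hd, if_neg hd, if_neg hb]
        rw [if_neg (by simp [hbd'.symm, hd]), if_neg (by simp [hbd', hb])]
        rw [sgn_insert _ _ _ hb, sgn_insert _ _ _ hd, Finset.insert_comm]
        have : gidx (Sum.inl b : Gen n) ≠ gidx (Sum.inl d) := by
          simp only [gidx]; exact fun h => hbd (Fin.ext h)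
        rcases lt_or_gt_of_ne this with h | h
        · rw [if_pos h, if_neg (not_lt.mpr h.le)]; simp only [if_false]; ring
        · rw [if_neg (not_lt.mpr h.le), if_pos h]; simp only [if_false]; ring

lemma EmOp_EmOp {n : ℕ} (a c : Fin n) (g : ExtA n) :
    EmOp a (EmOp c g) = - EmOp c (EmOp a g) := by
  classical
  funext U
  simp only [EmOp, Pi.neg_apply]
  by_cases hac : a = c
  · subst hac
    by_cases ha : Sum.inr a ∈ U
    · simp [ha, Finset.mem_erase]
    · simp [ha]
  · have hac' : (Sum.inr a : Gen n) ≠ Sum.inr c := by simp [hac]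
    by_cases ha : Sum.inr a ∈ U
    · by_cases hc : Sum.inr c ∈ U
      · rw [if_pos ha, if_pos hc,
          if_pos (Finset.mem_erase.mpr ⟨hac'.symm, hc⟩),
          if_pos (Finset.mem_erase.mpr ⟨hac', ha⟩)]
        have e1 : (U.erase (Sum.inr a)).erase (Sum.inr c)
            = (U.erase (Sum.inr c)).erase (Sum.inr a) := Finset.erase_right_comm
        have hca : Sum.inr c ∈ U.erase (Sum.inr a) := Finset.mem_erase.mpr ⟨hac'.symm, hc⟩
        have hax : Sum.inr a ∈ U.erase (Sum.inr c) := Finset.mem_erase.mpr ⟨hac', ha⟩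
        have h1 : sgn (Sum.inr a : Gen n) (U.erase (Sum.inr a))
            = (if gidx (Sum.inr c : Gen n) < gidx (Sum.inr a : Gen n) then -1 else 1)
              * sgn (Sum.inr a) ((U.erase (Sum.inr a)).erase (Sum.inr c)) := by
          conv_lhs => rw [← Finset.insert_erase hca]
          rw [sgn_insert _ _ _ (Finset.notMem_erase _ _)]
        have h2 : sgn (Sum.inr c : Gen n) (U.erase (Sum.inr c))
            = (if gidx (Sum.inr a : Gen n) < gidx (Sum.inr c : Gen n) then -1 else 1)
              * sgn (Sum.inr c) ((U.erase (Sum.inr c)).erase (Sum.inr a)) := by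
          conv_lhs => rw [← Finset.insert_erase hax]
          rw [sgn_insert _ _ _ (Finset.notMem_erase _ _)]
        rw [h1, h2, e1]
        have : gidx (Sum.inr a : Gen n) ≠ gidx (Sum.inr c) := by
          simp only [gidx]; exact fun h => hac (Fin.ext (by omega))
        rcases lt_or_gt_of_ne this with h | h
        · rw [if_pos h, if_neg (not_lt.mpr h.le)]; ring
        · rw [if_neg (not_lt.mpr h.le), if_pos h]; ring
      · have : Sum.inr c ∉ U.erase (Sum.inr a) := fun h => hc (Finset.mem_erase.mp h).2
        simp [ha, hc, this]
    · by_cases hc : Sum.inr c ∈ U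
      · have : Sum.inr a ∉ U.erase (Sum.inr c) := fun h => ha (Finset.mem_erase.mp h).2
        simp [ha, hc, this]
      · simp [ha, hc]

lemma EmOp_DmOp {n : ℕ} (a b : Fin n) (f : ExtA n) :
    EmOp a (DmOp b f) = - DmOp b (EmOp a f) := by
  classical
  funext U
  simp only [EmOp, DmOp, Pi.neg_apply]
  have hne : (Sum.inl b : Gen n) ≠ Sum.inr a := by simp
  by_cases ha : Sum.inr a ∈ U
  · by_cases hb : Sum.inl b ∈ U
    · have h1 : Sum.inl b ∈ U.erase (Sum.inr a) := Finset.mem_erase.mpr ⟨hne, hb⟩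
      simp [ha, hb, h1]
    · have h1 : Sum.inl b ∉ U.erase (Sum.inr a) := fun h => hb (Finset.mem_erase.mp h).2
      have h2 : Sum.inr a ∈ insert (Sum.inl b : Gen n) U := Finset.mem_insert_of_mem ha
      rw [if_pos ha, if_neg h1, if_neg hb, if_pos h2]
      have e1 : (insert (Sum.inl b : Gen n) U).erase (Sum.inr a)
          = insert (Sum.inl b) (U.erase (Sum.inr a)) :=
        Finset.erase_insert_of_ne hne
      rw [e1]
      have h3 : sgn (Sum.inl b : Gen n) U
          = (if gidx (Sum.inr a : Gen n) < gidx (Sum.inl b : Gen n) then -1 else 1)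
            * sgn (Sum.inl b) (U.erase (Sum.inr a)) := by
        conv_lhs => rw [← Finset.insert_erase ha]
        rw [sgn_insert _ _ _ (Finset.notMem_erase _ _)]
      have h4 : sgn (Sum.inr a : Gen n) (insert (Sum.inl b : Gen n) (U.erase (Sum.inr a)))
          = (if gidx (Sum.inl b : Gen n) < gidx (Sum.inr a : Gen n) then -1 else 1)
            * sgn (Sum.inr a) (U.erase (Sum.inr a)) := sgn_insert _ _ _ h1
      rw [h3, h4]
      have hlt : gidx (Sum.inl b : Gen n) < gidx (Sum.inr a : Gen n) := by
        simp only [gidx]; omega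
      rw [if_pos hlt, if_neg (not_lt.mpr hlt.le)]
      ring
  · by_cases hb : Sum.inl b ∈ U
    · simp [ha, hb]
    · have h2 : Sum.inr a ∉ insert (Sum.inl b : Gen n) U := by
        simp [ha, hne.symm]
      simp [ha, hb, h2]

lemma EmOp_neg {n : ℕ} (a : Fin n) (g : ExtA n) : EmOp a (-g) = - EmOp a g := by
  funext U; simp only [EmOp, Pi.neg_apply]; split <;> ring

lemma DmOp_neg {n : ℕ} (b : Fin n) (g : ExtA n) : DmOp b (-g) = - DmOp b g := by
  funext U; simp only [DmOp, Pi.neg_apply]; split <;> ring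

lemma EmOp_add {n : ℕ} (a : Fin n) (g h : ExtA n) : EmOp a (g + h) = EmOp a g + EmOp a h := by
  funext U; simp only [EmOp, Pi.add_apply]; split <;> ring

lemma DmOp_add {n : ℕ} (b : Fin n) (g h : ExtA n) : DmOp b (g + h) = DmOp b g + DmOp b h := by
  funext U; simp only [DmOp, Pi.add_apply]; split <;> ring

lemma EmOp_zero {n : ℕ} (a : Fin n) : EmOp a (0 : ExtA n) = 0 := by
  funext U; simp only [EmOp, Pi.zero_apply]; split <;> ring

lemma DmOp_zero {n : ℕ} (b : Fin n) : DmOp b (0 : ExtA n) = 0 := by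
  funext U; simp only [DmOp, Pi.zero_apply]; split <;> ring

/-- `M a c b d f = ξ_a ξ_c θ_b θ_d` acting on `f`. -/
noncomputable def Mop {n : ℕ} (a c b d : Fin n) (f : ExtA n) : ExtA n :=
  EmOp a (EmOp c (DmOp b (DmOp d f)))

lemma Mop_swap_em {n : ℕ} (a c b d : Fin n) (f : ExtA n) :
    Mop a c b d f = - Mop c a b d f := by
  unfold Mop; rw [EmOp_EmOp]

lemma Mop_swap_dm {n : ℕ} (a c b d : Fin n) (f : ExtA n) :
    Mop a c b d f = - Mop a c d b f := by
  unfold Mop; rw [DmOp_DmOp, EmOp_neg, EmOp_neg]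

/-- The elementary operator `E a b = ξ_a · (θ_b ⊙ ·)`. -/
noncomputable def Eop {n : ℕ} (a b : Fin n) (f : ExtA n) : ExtA n :=
  emul (xi a) (odot (theta b) f)

lemma Eop_eq {n : ℕ} (a b : Fin n) (f : ExtA n) : Eop a b f = EmOp a (DmOp b f) := by
  unfold Eop; rw [odot_theta, emul_xi]

lemma Eop_Eop {n : ℕ} (a b c d : Fin n) (f : ExtA n) :
    Eop a b (Eop c d f) = - Mop a c b d f := by
  rw [Eop_eq, Eop_eq]
  have h := EmOp_DmOp c b (DmOp d f)
  have h2 : DmOp b (EmOp c (DmOp d f)) = - EmOp c (DmOp b (DmOp d f)) := by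
    rw [h, neg_neg]
  rw [h2, EmOp_neg]; rfl

lemma Eop_add {n : ℕ} (a b : Fin n) (g h : ExtA n) :
    Eop a b (g + h) = Eop a b g + Eop a b h := by
  rw [Eop_eq, Eop_eq, Eop_eq, DmOp_add, EmOp_add]

/-- The symmetric operator `L a b = E a b + E b a`. -/
noncomputable def Lop {n : ℕ} (a b : Fin n) (f : ExtA n) : ExtA n :=
  Eop a b f + Eop b a f

lemma Lop_add {n : ℕ} (a b : Fin n) (g h : ExtA n) :
    Lop a b (g + h) = Lop a b g + Lop a b h := by
  simp only [Lop, Eop_eq, DmOp_add, EmOp_add]; abel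

lemma Lop_zero {n : ℕ} (a b : Fin n) : Lop a b (0 : ExtA n) = 0 := by
  simp only [Lop, Eop_eq, DmOp_zero, EmOp_zero]; abel

lemma Lop_sum {n : ℕ} (a b : Fin n) {ι : Type*} (s : Finset ι) (g : ι → ExtA n) :
    Lop a b (∑ x ∈ s, g x) = ∑ x ∈ s, Lop a b (g x) := by
  classical
  induction s using Finset.induction_on with
  | empty => simp [Lop_zero]
  | insert y s' hx ih => rw [Finset.sum_insert hx, Lop_add, ih, Finset.sum_insert hx]

lemma Lop_Lop {n : ℕ} (a b c d : Fin n) (f : ExtA n) :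
    Lop a b (Lop c d f) = -(Mop a c b d f + Mop a d b c f + Mop b c a d f + Mop b d a c f) := by
  simp only [Lop, Eop_add, Eop_Eop]
  abel

/-- The quadratic cancellation identity. -/
lemma Lop_quad {n : ℕ} (i j s t : Fin n) (f : ExtA n) :
    Lop i s (Lop j t f) + Lop i j (Lop s t f) + Lop i t (Lop j s f) = 0 := by
  rw [Lop_Lop, Lop_Lop, Lop_Lop]
  rw [Mop_swap_dm i j t s f, Mop_swap_dm i s t j f, Mop_swap_em t j i s f,
    Mop_swap_em t s i j f, Mop_swap_dm i t j s f, Mop_swap_em j s i t f]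
  abel

lemma psiPair_eq_Lop {n : ℕ} (A B : Finset (Fin n)) (f : ExtA n) :
    psiPair A B f = ∑ a ∈ A, ∑ b ∈ B, Lop a b f := rfl

lemma psiPair_comp {n : ℕ} (A B C D : Finset (Fin n)) (f : ExtA n) :
    psiPair A B (psiPair C D f)
      = ∑ a ∈ A, ∑ b ∈ B, ∑ c ∈ C, ∑ d ∈ D, Lop a b (Lop c d f) := by
  rw [psiPair_eq_Lop, psiPair_eq_Lop]
  refine Finset.sum_congr rfl fun a _ => Finset.sum_congr rfl fun b _ => ?_
  rw [Lop_sum]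
  exact Finset.sum_congr rfl fun c _ => Lop_sum a b D _

/-- Mixed-pair operators annihilate via antisymmetry: for pairwise disjoint
`I, J, S, T ⊆ [n]`, `ψ_{I,S}∘ψ_{J,T} + ψ_{I,J}∘ψ_{S,T} + ψ_{I,T}∘ψ_{J,S} = 0`. -/
theorem psiPair_annihilate (n : ℕ) (I J S T : Finset (Fin n))
    (hIJ : Disjoint I J) (hIS : Disjoint I S) (hIT : Disjoint I T)
    (hJS : Disjoint J S) (hJT : Disjoint J T) (hST : Disjoint S T) (f : ExtA n) :
    psiPair I S (psiPair J T f) + psiPair I J (psiPair S T f)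
      + psiPair I T (psiPair J S f) = 0 := by
  have e1 : psiPair I S (psiPair J T f)
      = ∑ i ∈ I, ∑ j ∈ J, ∑ s ∈ S, ∑ t ∈ T, Lop i s (Lop j t f) := by
    rw [psiPair_comp]
    exact Finset.sum_congr rfl fun i _ => Finset.sum_comm
  have e2 : psiPair I J (psiPair S T f)
      = ∑ i ∈ I, ∑ j ∈ J, ∑ s ∈ S, ∑ t ∈ T, Lop i j (Lop s t f) := psiPair_comp I J S T f
  have e3 : psiPair I T (psiPair J S f)
      = ∑ i ∈ I, ∑ j ∈ J, ∑ s ∈ S, ∑ t ∈ T, Lop i t (Lop j s f) := by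
    rw [psiPair_comp]
    refine Finset.sum_congr rfl fun i _ => ?_
    rw [Finset.sum_comm]
    exact Finset.sum_congr rfl fun j _ => Finset.sum_comm
  rw [e1, e2, e3]
  have : (∑ i ∈ I, ∑ j ∈ J, ∑ s ∈ S, ∑ t ∈ T,
      (Lop i s (Lop j t f) + Lop i j (Lop s t f) + Lop i t (Lop j s f))) = 0 := by
    simp [Lop_quad]
  rw [← this]
  simp [Finset.sum_add_distrib]
end
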